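/- Let m be a positive odd integer and n a positive integer with n ≥ m. Then the map from {0, 1, …, m−1} to {0, 1, …, n−1} sending x to (((2x) mod m) − x) mod n is injective. -/
import Mathlib


/-- For `m` odd positive and `n ≥ m`, the map `x ↦ ((2x mod m) − x) mod n`
is injective on `{0, 1, …, m−1}`. -/
theorem stmt_8 (m n : ℤ) (hm : 0 < m) (hmodd : Odd m) (hmn : m ≤ n) :
    Set.InjOn (fun x : ℤ => (2 * x % m - x) % n) {x : ℤ | 0 ≤ x ∧ x < m} := by
  obtain ⟨t, ht⟩ := hmodd
  rintro a ⟨ha0, ha1⟩ b ⟨hb0, hb1⟩ h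
  simp only at h
  have hmod : ∀ x : ℤ, 0 ≤ x → x < m → (2 * x % m = 2 * x ∧ 2 * x < m) ∨
      (2 * x % m = 2 * x - m ∧ m ≤ 2 * x) := by
    intro x hx0 hx1
    rcases lt_or_ge (2 * x) m with hlt | hge
    · exact Or.inl ⟨Int.emod_eq_of_lt (by linarith) hlt, hlt⟩
    · refine Or.inr ⟨?_, hge⟩
      have h2 : (2 * x) % m = (2 * x - m) % m := by
        conv_lhs => rw [show (2 * x) = (2 * x - m) + 1 * m by ring]
        rw [Int.add_mul_emod_self_right]
      rw [h2]
      exact Int.emod_eq_of_lt (by linarith) (by linarith)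
  have hn : 0 < n := lt_of_lt_of_le hm hmn
  have hdvd : n ∣ (2 * a % m - a) - (2 * b % m - b) :=
    Int.dvd_of_emod_eq_zero (Int.emod_eq_emod_iff_emod_sub_eq_zero.mp h)
  obtain ⟨k, hk⟩ := hdvd
  have hkb : ∀ c : ℤ, c = n * k → -2 * n < c → c < 2 * n → -2 < k ∧ k < 2 := by
    intro c hc h1 h2
    constructor
    · nlinarith
    · nlinarith
  rcases hmod a ha0 ha1 with ⟨ea, ba⟩ | ⟨ea, ba⟩ <;>
    rcases hmod b hb0 hb1 with ⟨eb, bb⟩ | ⟨eb, bb⟩ <;>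
    rw [ea, eb] at hk <;>
    [ (have := hkb _ hk (by linarith) (by linarith));
      (have := hkb _ hk (by linarith) (by linarith));
      (have := hkb _ hk (by linarith) (by linarith));
      (have := hkb _ hk (by linarith) (by linarith))] <;>
    · obtain ⟨hk1, hk2⟩ := this
      interval_cases k <;> omega
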